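/- For 0 < δ < 1 and real s > 1 − δ, the series ∑_{m=1}^∞ rad(m)^{-δ} m^{-s} converges, and equals the Euler product ∏_p (1 + p^{-δ-s}/(1 − p^{-s})). -/

import Mathlib

open Real Finset Nat

/-- `rad n` : the radical of `n`, the product of the distinct primes dividing `n`. -/
def rad (n : ℕ) : ℕ := ∏ p ∈ n.primeFactors, p

section aux

variable (δ s : ℝ)

private noncomputable def fRad (m : ℕ) : ℝ := (rad m : ℝ) ^ (-δ) * (m : ℝ) ^ (-s)

private lemma fRad_nonneg (m : ℕ) : 0 ≤ fRad δ s m :=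
  mul_nonneg (Real.rpow_nonneg (Nat.cast_nonneg _) _) (Real.rpow_nonneg (Nat.cast_nonneg _) _)

variable {δ s}

private lemma fRad_zero (hs : 0 < s) : fRad δ s 0 = 0 := by
  have : (0:ℝ) ^ (-s) = 0 := Real.zero_rpow (by intro h; rw [neg_eq_zero] at h; linarith)
  simp [fRad, this]

private lemma fRad_one : fRad δ s 1 = 1 := by
  simp [fRad, rad]

private lemma fRad_mul {m n : ℕ} (h : Nat.Coprime m n) :
    fRad δ s (m * n) = fRad δ s m * fRad δ s n := by
  rcases eq_or_ne m 0 with rfl | hm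
  · rw [Nat.coprime_zero_left] at h; subst h; simp [fRad, rad]
  rcases eq_or_ne n 0 with rfl | hn
  · rw [Nat.coprime_zero_right] at h; subst h; simp [fRad, rad]
  have hrad : rad (m * n) = rad m * rad n := by
    rw [rad, rad, rad, Nat.primeFactors_mul hm hn,
      Finset.prod_union (Nat.Coprime.disjoint_primeFactors h)]
  rw [fRad, fRad, fRad, hrad]
  push_cast
  rw [Real.mul_rpow (Nat.cast_nonneg _) (Nat.cast_nonneg _),
    Real.mul_rpow (Nat.cast_nonneg _) (Nat.cast_nonneg _)]
  ring

private lemma fRad_prime_pow {p : ℕ} (hp : p.Prime) (e : ℕ) :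
    fRad δ s (p ^ (e + 1)) = (p:ℝ) ^ (-δ) * ((p:ℝ) ^ (-s)) ^ (e + 1) := by
  have hq0 : (0:ℝ) ≤ (p:ℝ) := Nat.cast_nonneg p
  have hrad : rad (p ^ (e + 1)) = p := by
    rw [rad, Nat.primeFactors_prime_pow (Nat.succ_ne_zero e) hp]
    simp
  have key : ((p:ℝ) ^ (-s)) ^ (e + 1) = ((p:ℝ) ^ (e + 1) : ℝ) ^ (-s) := by
    rw [← Real.rpow_natCast ((p:ℝ) ^ (-s)) (e + 1), ← Real.rpow_natCast (p:ℝ) (e + 1),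
      ← Real.rpow_mul hq0, ← Real.rpow_mul hq0, mul_comm]
  rw [fRad, hrad, key]
  push_cast
  ring_nf

/-- The local factor at a prime `p`. -/
private lemma fRad_hasSum_prime {p : ℕ} (hp : p.Prime) (h0 : 0 < δ) (hs : 0 < s) :
    HasSum (fun e : ℕ => fRad δ s (p ^ e))
      (1 + (p:ℝ) ^ (-δ - s) / (1 - (p:ℝ) ^ (-s))) := by
  have hq1 : (1:ℝ) < (p:ℝ) := by exact_mod_cast hp.one_lt
  have hq0 : (0:ℝ) < (p:ℝ) := lt_trans one_pos hq1
  set x : ℝ := (p:ℝ) ^ (-s) with hxdef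
  have hx0 : 0 ≤ x := Real.rpow_nonneg hq0.le _
  have hx1 : x < 1 := Real.rpow_lt_one_of_one_lt_of_neg hq1 (by linarith)
  have hgeo : HasSum (fun e : ℕ => ((p:ℝ) ^ (-δ) * x) * x ^ e)
      ((p:ℝ) ^ (-δ) * x * (1 - x)⁻¹) :=
    (hasSum_geometric_of_lt_one hx0 hx1).mul_left _
  have hshift : HasSum (fun e : ℕ => fRad δ s (p ^ (e + 1)))
      ((p:ℝ) ^ (-δ) * x * (1 - x)⁻¹) := by
    have heq : (fun e : ℕ => fRad δ s (p ^ (e + 1)))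
        = fun e : ℕ => ((p:ℝ) ^ (-δ) * x) * x ^ e := by
      funext e
      rw [fRad_prime_pow hp]
      ring
    rw [heq]
    exact hgeo
  have h2 := (hasSum_nat_add_iff (f := fun e : ℕ => fRad δ s (p ^ e)) 1).mp hshift
  have hval : (p:ℝ) ^ (-δ) * x * (1 - x)⁻¹ + ∑ i ∈ Finset.range 1, fRad δ s (p ^ i)
      = 1 + (p:ℝ) ^ (-δ - s) / (1 - x) := by
    rw [Finset.sum_range_one, pow_zero, fRad_one,
      show -δ - s = -δ + -s by ring, Real.rpow_add hq0, div_eq_mul_inv]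
    ring
  rwa [hval] at h2

private lemma fRad_norm_summable_prime {p : ℕ} (hp : p.Prime) (h0 : 0 < δ) (hs : 0 < s) :
    Summable (fun n : ℕ => ‖fRad δ s (p ^ n)‖) :=
  (fRad_hasSum_prime hp h0 hs).summable.congr
    fun n => (Real.norm_of_nonneg (fRad_nonneg δ s _)).symm

set_option maxHeartbeats 1000000 in
set_option maxHeartbeats 1000000 in
private lemma fRad_summable (h0 : 0 < δ) (h1 : δ < 1) (hs : 1 - δ < s) :
    Summable (fRad δ s) := by
  have hsp : 0 < s := by linarith
  have h2s : (2:ℝ) ^ (-s) < 1 := Real.rpow_lt_one_of_one_lt_of_neg one_lt_two (by linarith)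
  have hd : (0:ℝ) < 1 - (2:ℝ) ^ (-s) := by linarith
  set C : ℝ := (1 - (2:ℝ) ^ (-s))⁻¹ with hCdef
  have hC : 0 < C := inv_pos.mpr hd
  set g : ℕ → ℝ := fun n => C * (n:ℝ) ^ (-(δ + s)) with hgdef
  have hgsum : Summable g := (Real.summable_nat_rpow.mpr (by linarith)).mul_left C
  have hgnonneg : ∀ n, 0 ≤ g n := fun n => mul_nonneg hC.le (Real.rpow_nonneg (Nat.cast_nonneg _) _)
  have hloc : ∀ p : ℕ, p.Prime →
      (∑' n : ℕ, fRad δ s (p ^ n)) = 1 + (p:ℝ) ^ (-δ - s) / (1 - (p:ℝ) ^ (-s)) :=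
    fun p hp => (fRad_hasSum_prime hp h0 hsp).tsum_eq
  have hapos : ∀ p : ℕ, p.Prime → 0 ≤ (p:ℝ) ^ (-δ - s) / (1 - (p:ℝ) ^ (-s)) := by
    intro p hp
    have hq1 : (1:ℝ) < (p:ℝ) := by exact_mod_cast hp.one_lt
    have hx1 : (p:ℝ) ^ (-s) < 1 := Real.rpow_lt_one_of_one_lt_of_neg hq1 (by linarith)
    exact div_nonneg (Real.rpow_nonneg (by positivity) _) (by linarith)
  have habd : ∀ p : ℕ, p.Prime → (p:ℝ) ^ (-δ - s) / (1 - (p:ℝ) ^ (-s)) ≤ g p := by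
    intro p hp
    have h2p : (2:ℝ) ≤ (p:ℝ) := by exact_mod_cast hp.two_le
    have hxle : (p:ℝ) ^ (-s) ≤ (2:ℝ) ^ (-s) :=
      Real.rpow_le_rpow_of_nonpos two_pos h2p (by linarith)
    have hnum : (0:ℝ) ≤ (p:ℝ) ^ (-δ - s) := Real.rpow_nonneg (by positivity) _
    calc (p:ℝ) ^ (-δ - s) / (1 - (p:ℝ) ^ (-s))
        ≤ (p:ℝ) ^ (-δ - s) / (1 - (2:ℝ) ^ (-s)) := by gcongr
      _ = C * (p:ℝ) ^ (-(δ + s)) := by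
          rw [div_eq_mul_inv, mul_comm, hCdef, show -δ - s = -(δ + s) by ring]
      _ = g p := rfl
  refine summable_of_sum_le (c := Real.exp (∑' n : ℕ, g n)) (fRad_nonneg δ s) (fun u => ?_)
  set S : Finset ℕ := u.biUnion Nat.primeFactors with hSdef
  obtain ⟨-, hP⟩ := EulerProduct.summable_and_hasSum_factoredNumbers_prod_filter_prime_tsum
    (f := fRad δ s) fRad_one (fun {m n} h => fRad_mul h)
    (fun {p} hp => fRad_norm_summable_prime hp h0 hsp) S
  classical
  have hstep1 : ∑ m ∈ u, fRad δ s m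
      ≤ ∏ p ∈ S.filter Nat.Prime, ∑' n : ℕ, fRad δ s (p ^ n) := by
    have hmem : ∀ m ∈ u, fRad δ s m ≠ 0 → m ∈ Nat.factoredNumbers S := by
      intro m hmu hm0
      rcases eq_or_ne m 0 with rfl | hne
      · exact absurd (fRad_zero hsp) hm0
      · exact Nat.mem_factoredNumbers_of_primeFactors_subset hne
          (Finset.subset_biUnion_of_mem Nat.primeFactors hmu)
    calc ∑ m ∈ u, fRad δ s m
        = ∑ m ∈ u.filter (· ∈ Nat.factoredNumbers S), fRad δ s m :=
          (Finset.sum_filter_of_ne hmem).symm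
      _ = ∑ m ∈ u.subtype (· ∈ Nat.factoredNumbers S), fRad δ s m :=
          (Finset.sum_subtype_eq_sum_filter _ (p := (· ∈ Nat.factoredNumbers S))).symm
      _ ≤ ∏ p ∈ S.filter Nat.Prime, ∑' n : ℕ, fRad δ s (p ^ n) :=
          sum_le_hasSum _ (fun m _ => fRad_nonneg δ s m) hP
  have hstep2 : ∏ p ∈ S.filter Nat.Prime, ∑' n : ℕ, fRad δ s (p ^ n)
      ≤ Real.exp (∑' n : ℕ, g n) := by
    calc ∏ p ∈ S.filter Nat.Prime, ∑' n : ℕ, fRad δ s (p ^ n)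
        ≤ ∏ p ∈ S.filter Nat.Prime, Real.exp ((p:ℝ) ^ (-δ - s) / (1 - (p:ℝ) ^ (-s))) := by
          refine Finset.prod_le_prod (fun p hp => ?_) (fun p hp => ?_)
          · rw [hloc p (Finset.mem_filter.mp hp).2]
            linarith [hapos p (Finset.mem_filter.mp hp).2]
          · rw [hloc p (Finset.mem_filter.mp hp).2, add_comm]
            exact Real.add_one_le_exp _
      _ = Real.exp (∑ p ∈ S.filter Nat.Prime, (p:ℝ) ^ (-δ - s) / (1 - (p:ℝ) ^ (-s))) :=
          (Real.exp_sum _ _).symm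
      _ ≤ Real.exp (∑' n : ℕ, g n) := by
          refine Real.exp_le_exp.mpr ?_
          calc ∑ p ∈ S.filter Nat.Prime, (p:ℝ) ^ (-δ - s) / (1 - (p:ℝ) ^ (-s))
              ≤ ∑ p ∈ S.filter Nat.Prime, g p :=
                Finset.sum_le_sum fun p hp => habd p (Finset.mem_filter.mp hp).2
            _ ≤ ∑' n : ℕ, g n :=
                Summable.sum_le_tsum _ (fun n _ => hgnonneg n) hgsum
  exact hstep1.trans hstep2

end aux

theorem stmt14 (δ s : ℝ) (h0 : 0 < δ) (h1 : δ < 1) (hs : 1 - δ < s) :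
    Summable (fun m : ℕ => (rad m : ℝ) ^ (-δ) * (m : ℝ) ^ (-s)) ∧
    (∑' m : ℕ, (rad m : ℝ) ^ (-δ) * (m : ℝ) ^ (-s))
      = ∏' p : Nat.Primes,
          (1 + ((p : ℕ) : ℝ) ^ (-δ - s) / (1 - ((p : ℕ) : ℝ) ^ (-s))) := by
  have hsp : 0 < s := by linarith
  have hmain : Summable (fRad δ s) := fRad_summable h0 h1 hs
  have hnorm : Summable (fun n => ‖fRad δ s n‖) :=
    hmain.congr fun n => (Real.norm_of_nonneg (fRad_nonneg δ s n)).symm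
  refine ⟨hmain, ?_⟩
  have hEP := EulerProduct.eulerProduct_tprod (f := fRad δ s) fRad_one
    (fun {m n} h => fRad_mul h) hnorm (fRad_zero hsp)
  have heq : (∑' m : ℕ, fRad δ s m) = ∏' p : Nat.Primes, ∑' e : ℕ, fRad δ s ((p : ℕ) ^ e) :=
    hEP.symm
  rw [show (fun m : ℕ => (rad m : ℝ) ^ (-δ) * (m : ℝ) ^ (-s)) = fRad δ s from rfl, heq]
  exact tprod_congr fun p => (fRad_hasSum_prime p.prop h0 hsp).tsum_eq
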